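/- Let m be even and, for τ ∈ {−1,+1}^{m/2}, define σ(τ) ∈ {−1,+1}^m by σ_i(τ) = τ_i and σ_{i+m/2}(τ) = −τ_i for 1 ≤ i ≤ m/2. If τ, τ' ∈ {−1,+1}^{m/2} satisfy ρ(τ,τ') = Σ_i |τ_i − τ'_i| = 2, then the squared Hellinger distance between the n-fold product measures satisfies H²(P_{σ(τ)}^{⊗n}, P_{σ(τ')}^{⊗n}) ≤ 4nδ²/m. -/

import Mathlib

open MeasureTheory Metric
open scoped Classical

noncomputable section

/-- normalization constant of the cone-shaped density of radius `ρ` on `ℝ^d`. -/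
def coneNorm (d : ℕ) (ρ : ℝ) : ℝ :=
  ∫ y : EuclideanSpace ℝ (Fin d), max (ρ - ‖y‖) 0

/-- the density of the distribution `P_σ`: mass `(1+σ_i δ)/(2m)` on each of the
balls `U_i = B(z_i,ρ)` and `U'_i = B(z_i+w_i,ρ)`, with cone-shaped profile. -/
def Pdens {m d : ℕ} (z w : Fin m → EuclideanSpace ℝ (Fin d)) (ρ δ : ℝ)
    (σ : Fin m → ℝ) (x : EuclideanSpace ℝ (Fin d)) : ℝ :=
  ∑ i, ((1 + σ i * δ) / (2 * m)) *
    ((max (ρ - ‖x - z i‖) 0 + max (ρ - ‖x - (z i + w i)‖) 0) / coneNorm d ρ)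

/-- the distribution `P_σ`. -/
def Pmeas {m d : ℕ} (z w : Fin m → EuclideanSpace ℝ (Fin d)) (ρ δ : ℝ)
    (σ : Fin m → ℝ) : Measure (EuclideanSpace ℝ (Fin d)) :=
  MeasureTheory.volume.withDensity (fun x => ENNReal.ofReal (Pdens z w ρ δ σ x))

/-- the quantizer `Q_σ`: on `U_i ∪ U'_i` it maps to `z_i + w_i/2` if `σ_i = −1`,
and to `z_i` on `U_i`, `z_i + w_i` on `U'_i`, if `σ_i = +1`. -/
def Qquant {m d : ℕ} (z w : Fin m → EuclideanSpace ℝ (Fin d)) (ρ : ℝ)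
    (σ : Fin m → ℝ) (x : EuclideanSpace ℝ (Fin d)) : EuclideanSpace ℝ (Fin d) :=
  if h : ∃ i, x ∈ closedBall (z i) ρ ∨ x ∈ closedBall (z i + w i) ρ then
    (if σ h.choose = -1 then z h.choose + (2 : ℝ)⁻¹ • w h.choose
     else if x ∈ closedBall (z h.choose) ρ then z h.choose
     else z h.choose + w h.choose)
  else 0

/-- the distortion of a quantizer `Q` under the source distribution `P`. -/
def Rquant {d : ℕ} (Q : EuclideanSpace ℝ (Fin d) → EuclideanSpace ℝ (Fin d))
    (P : Measure (EuclideanSpace ℝ (Fin d))) : ℝ :=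
  ∫ x, ‖x - Q x‖ ^ 2 ∂P

/-- `σ(τ)`: the first `m/2` coordinates equal `τ`, the last `m/2` equal `−τ`. -/
def sigmaOf {m' : ℕ} (τ : Fin m' → ℝ) : Fin (2 * m') → ℝ := fun i =>
  if h : (i : ℕ) < m' then τ ⟨i, h⟩
  else -τ ⟨(i : ℕ) - m', by have := i.isLt; omega⟩

lemma cone_cont {d : ℕ} (ρ : ℝ) (a : EuclideanSpace ℝ (Fin d)) :
    Continuous (fun x : EuclideanSpace ℝ (Fin d) => max (ρ - ‖x - a‖) 0) :=
  ((continuous_const.sub ((continuous_id.sub continuous_const).norm))).max continuous_const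

lemma cone_integrable {d : ℕ} (ρ : ℝ) (a : EuclideanSpace ℝ (Fin d)) :
    Integrable (fun x : EuclideanSpace ℝ (Fin d) => max (ρ - ‖x - a‖) 0) := by
  apply (cone_cont ρ a).integrable_of_hasCompactSupport
  apply HasCompactSupport.intro (isCompact_closedBall a (max ρ 0))
  intro x hx
  simp only [mem_closedBall, dist_eq_norm, not_le] at hx
  have : ρ - ‖x - a‖ < 0 := by
    have := le_max_left ρ (0:ℝ); linarith
  simp [max_eq_right this.le]

lemma cone_integral {d : ℕ} (ρ : ℝ) (a : EuclideanSpace ℝ (Fin d)) :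
    ∫ x : EuclideanSpace ℝ (Fin d), max (ρ - ‖x - a‖) 0 = coneNorm d ρ := by
  rw [coneNorm]
  exact integral_sub_right_eq_self (fun y => max (ρ - ‖y‖) 0) a

lemma coneNorm_pos {d : ℕ} {ρ : ℝ} (hρ : 0 < ρ) : 0 < coneNorm d ρ := by
  rw [coneNorm]
  have hi : Integrable (fun y : EuclideanSpace ℝ (Fin d) => max (ρ - ‖y‖) 0) := by
    simpa using cone_integrable ρ (0 : EuclideanSpace ℝ (Fin d))
  refine (integral_pos_iff_support_of_nonneg
    (f := fun y : EuclideanSpace ℝ (Fin d) => max (ρ - ‖y‖) 0)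
    (fun y => le_max_right _ _) hi).mpr ?_
  refine lt_of_lt_of_le (measure_ball_pos volume (0 : EuclideanSpace ℝ (Fin d)) hρ) ?_
  apply measure_mono
  intro y hy
  simp only [mem_ball, dist_zero_right] at hy
  simp only [Function.mem_support]
  have : 0 < ρ - ‖y‖ := by linarith
  exact ne_of_gt (lt_max_of_lt_left this)

lemma sum_sigmaOf2 {m' : ℕ} (F : ℝ → ℝ → ℝ) (τ τ' : Fin m' → ℝ) :
    ∑ i : Fin (2 * m'), F (sigmaOf τ i) (sigmaOf τ' i)
      = ∑ j : Fin m', (F (τ j) (τ' j) + F (-τ j) (-τ' j)) := by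
  rw [← Fintype.sum_equiv (finSumFinEquiv.trans (finCongr (two_mul m').symm))
    (fun x : Fin m' ⊕ Fin m' =>
      F (sigmaOf τ ((finSumFinEquiv.trans (finCongr (two_mul m').symm)) x))
        (sigmaOf τ' ((finSumFinEquiv.trans (finCongr (two_mul m').symm)) x)))
    (fun i => F (sigmaOf τ i) (sigmaOf τ' i)) (fun x => rfl)]
  rw [Fintype.sum_sum_type, ← Finset.sum_add_distrib]
  apply Finset.sum_congr rfl
  intro j _
  have h1 : (((finSumFinEquiv.trans (finCongr (two_mul m').symm)) (Sum.inl j) :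
      Fin (2 * m')) : ℕ) = (j : ℕ) := by
    simp
  have h2 : (((finSumFinEquiv.trans (finCongr (two_mul m').symm)) (Sum.inr j) :
      Fin (2 * m')) : ℕ) = m' + (j : ℕ) := by
    simp [Nat.add_comm]
  have v1 : ∀ σ : Fin m' → ℝ,
      sigmaOf σ ((finSumFinEquiv.trans (finCongr (two_mul m').symm)) (Sum.inl j)) = σ j := by
    intro σ
    rw [sigmaOf, dif_pos (by rw [h1]; exact j.isLt)]
    congr 1
  have v2 : ∀ σ : Fin m' → ℝ,
      sigmaOf σ ((finSumFinEquiv.trans (finCongr (two_mul m').symm)) (Sum.inr j)) = -σ j := by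
    intro σ
    rw [sigmaOf, dif_neg (by rw [h2]; omega)]
    rw [neg_inj]
    congr 1
    apply Fin.ext
    simp [h2]
  rw [v1, v1, v2, v2]

lemma sigmaOf_pm {m' : ℕ} {τ : Fin m' → ℝ} (hτ : ∀ i, τ i = 1 ∨ τ i = -1) :
    ∀ i, sigmaOf τ i = 1 ∨ sigmaOf τ i = -1 := by
  intro i
  rw [sigmaOf]
  split
  · exact hτ _
  · rcases hτ ⟨(i : ℕ) - m', by have := i.isLt; omega⟩ with h | h <;> rw [h] <;> simp

lemma sqrt_prod {ι : Type*} (s : Finset ι) (f : ι → ℝ) (h : ∀ i ∈ s, 0 ≤ f i) :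
    Real.sqrt (∏ i ∈ s, f i) = ∏ i ∈ s, Real.sqrt (f i) := by
  induction s using Finset.cons_induction with
  | empty => simp
  | cons a s ha ih =>
    rw [Finset.prod_cons, Finset.prod_cons, Real.sqrt_mul (h a (Finset.mem_cons_self a s)),
      ih (fun i hi => h i (Finset.mem_cons_of_mem hi))]

lemma term_bound {δ N : ℝ} (hδ0 : 0 < δ) (hδ : δ ≤ 1/3) (hN : 0 < N) {s s' : ℝ}
    (hs : s = 1 ∨ s = -1) (hs' : s' = 1 ∨ s' = -1) :
    2*((1+s*δ)/(2*N)) + 2*((1+s'*δ)/(2*N))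
      - 4*Real.sqrt ((1+s*δ)/(2*N) * ((1+s'*δ)/(2*N)))
      ≤ δ^2/N * |s - s'| := by
  have hδ2 : (0:ℝ) ≤ 1 - δ^2 := by nlinarith
  have hu0 : 0 ≤ Real.sqrt (1-δ^2) := Real.sqrt_nonneg _
  have hu2 : Real.sqrt (1-δ^2)^2 = 1-δ^2 := Real.sq_sqrt hδ2
  have hu1 : Real.sqrt (1-δ^2) ≤ 1 := by nlinarith
  have huge : 1 - δ^2 ≤ Real.sqrt (1-δ^2) := by nlinarith
  have heq : ∀ t : ℝ, t = 1 ∨ t = -1 → 0 ≤ (1+t*δ)/(2*N) := by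
    intro t ht
    rcases ht with h | h <;> subst h <;> apply div_nonneg (by nlinarith) (by linarith)
  have key : ∀ t t' : ℝ, t = 1 → t' = -1 →
      2*((1+t*δ)/(2*N)) + 2*((1+t'*δ)/(2*N))
        - 4*Real.sqrt ((1+t*δ)/(2*N) * ((1+t'*δ)/(2*N))) ≤ δ^2/N * |t - t'| := by
    intro t t' ht ht'
    subst ht ht'
    have hprod : (1+1*δ)/(2*N) * ((1+(-1)*δ)/(2*N)) = (Real.sqrt (1-δ^2)/(2*N))^2 := by
      rw [div_pow, hu2]
      field_simp; ring
    rw [hprod, Real.sqrt_sq (by positivity)]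
    rw [show |(1:ℝ) - -1| = 2 by norm_num]
    rw [← sub_nonneg]
    have expr : δ^2/N*2 - (2*((1+1*δ)/(2*N)) + 2*((1+(-1)*δ)/(2*N))
        - 4*(Real.sqrt (1-δ^2)/(2*N))) = (2*δ^2 - 2 + 2*Real.sqrt (1-δ^2))/N := by
      field_simp; ring
    rw [expr]
    apply div_nonneg (by nlinarith) hN.le
  rcases hs with h | h <;> rcases hs' with h' | h' <;> subst h <;> subst h'
  · rw [Real.sqrt_mul_self (heq 1 (Or.inl rfl))]; simp; linarith
  · exact key 1 (-1) rfl rfl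
  · rw [show |(-1:ℝ) - 1| = |(1:ℝ) - -1| by rw [abs_sub_comm]]
    have := key 1 (-1) rfl rfl
    rw [show (1+(-1)*δ)/(2*N) * ((1+1*δ)/(2*N)) = (1+1*δ)/(2*N) * ((1+(-1)*δ)/(2*N)) by ring]
    linarith
  · rw [Real.sqrt_mul_self (heq (-1) (Or.inr rfl))]; simp; linarith

set_option maxHeartbeats 2000000 in
/-- Lemma 4.8: if `ρ(τ,τ') = 2` then the squared Hellinger distance between the
`n`-fold products satisfies `H²(P_{σ(τ)}^{⊗n}, P_{σ(τ')}^{⊗n}) ≤ 4nδ²/m`. -/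
theorem stmt16 (d k m' : ℕ) (hd : 1 ≤ d) (hk3 : 3 ≤ k) (hdvd : 3 ∣ k)
    (hm : 3 * (2 * m') = 2 * k)
    (M Δ ρ δ : ℝ) (hM : 0 < M)
    (hΔ : Δ = 5 * M / (32 * ((2 * m' : ℕ) : ℝ) ^ ((1 : ℝ) / d)))
    (hρ : ρ = Δ / 16) (hδ0 : 0 < δ) (hδ : δ ≤ 1 / 3)
    (z w : Fin (2 * m') → EuclideanSpace ℝ (Fin d))
    (hz : ∀ i, z i ∈ closedBall (0 : EuclideanSpace ℝ (Fin d)) (M - ρ))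
    (hzsep : ∀ i j, i ≠ j → 6 * Δ ≤ dist (z i) (z j))
    (hw : ∀ i, ‖w i‖ = Δ)
    (hU : ∀ i, closedBall (z i) ρ ⊆ closedBall (0 : EuclideanSpace ℝ (Fin d)) M ∧
      closedBall (z i + w i) ρ ⊆ closedBall (0 : EuclideanSpace ℝ (Fin d)) M)
    (τ τ' : Fin m' → ℝ)
    (hτ : ∀ i, τ i = 1 ∨ τ i = -1) (hτ' : ∀ i, τ' i = 1 ∨ τ' i = -1)
    (hρττ' : ∑ i, |τ i - τ' i| = 2)
    (n : ℕ) (hn : 0 < n) :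
    (∫ xs : Fin n → EuclideanSpace ℝ (Fin d),
        (Real.sqrt (∏ j, Pdens z w ρ δ (sigmaOf τ) (xs j)) -
          Real.sqrt (∏ j, Pdens z w ρ δ (sigmaOf τ') (xs j))) ^ 2
      ∂(Measure.pi fun _ : Fin n => MeasureTheory.volume)) ≤
      4 * n * δ ^ 2 / (2 * m') := by

  classical
  have hm'1 : 1 ≤ m' := by omega
  have hNpos : (0:ℝ) < ((2 * m' : ℕ) : ℝ) := by
    have : 0 < 2 * m' := by omega
    exact_mod_cast this
  set N : ℝ := ((2 * m' : ℕ) : ℝ) with hNdef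
  have hΔpos : 0 < Δ := by
    rw [hΔ]
    have hb : (0:ℝ) < ((2 * m' : ℕ) : ℝ) ^ ((1:ℝ)/d) := Real.rpow_pos_of_pos hNpos _
    apply div_pos (by linarith) (by nlinarith)
  have hρpos : 0 < ρ := by rw [hρ]; linarith
  have hc : 0 < coneNorm d ρ := coneNorm_pos hρpos
  set ψ : Fin (2*m') → EuclideanSpace ℝ (Fin d) → ℝ :=
    fun i x => (max (ρ - ‖x - z i‖) 0 + max (ρ - ‖x - (z i + w i)‖) 0) / coneNorm d ρ
    with hψdef
  set co : (Fin (2*m') → ℝ) → Fin (2*m') → ℝ :=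
    fun σ i => (1 + σ i * δ) / (2 * N) with hcodef
  have Pdens_eq : ∀ (σ : Fin (2*m') → ℝ) (x : EuclideanSpace ℝ (Fin d)),
      Pdens z w ρ δ σ x = ∑ i, co σ i * ψ i x := fun σ x => rfl
  have ψ_nn : ∀ i x, 0 ≤ ψ i x := fun i x =>
    div_nonneg (add_nonneg (le_max_right _ _) (le_max_right _ _)) hc.le
  have ψ_int : ∀ i, Integrable (ψ i) := fun i =>
    ((cone_integrable ρ (z i)).add (cone_integrable ρ (z i + w i))).div_const _
  have ψ_integral : ∀ i, ∫ x, ψ i x = 2 := by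
    intro i
    simp only [hψdef]
    rw [integral_div, integral_add (cone_integrable ρ (z i)) (cone_integrable ρ (z i + w i)),
      cone_integral, cone_integral]
    field_simp
    ring
  -- disjointness of the supports of the ψ i
  have hbump_le : ∀ (x : EuclideanSpace ℝ (Fin d)) (i : Fin (2*m')),
      ψ i x ≠ 0 → dist x (z i) ≤ ρ + Δ := by
    intro x i hne
    by_contra hfar
    push_neg at hfar
    have h1 : ρ - ‖x - z i‖ ≤ 0 := by
      rw [dist_eq_norm] at hfar; linarith
    have h2 : ρ - ‖x - (z i + w i)‖ ≤ 0 := by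
      have ht : dist x (z i) ≤ dist x (z i + w i) + dist (z i + w i) (z i) :=
        dist_triangle _ _ _
      have hwd : dist (z i + w i) (z i) = Δ := by
        rw [dist_eq_norm]
        rw [add_sub_cancel_left]
        exact hw i
      rw [hwd] at ht
      simp only [dist_eq_norm] at ht hfar
      linarith
    apply hne
    simp only [hψdef, max_eq_right h1, max_eq_right h2, add_zero, zero_div]
  have hdisjψ : ∀ (x : EuclideanSpace ℝ (Fin d)) (i j : Fin (2*m')), i ≠ j →
      ψ i x ≠ 0 → ψ j x = 0 := by
    intro x i j hij hi
    by_contra hj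
    have di := hbump_le x i hi
    have dj := hbump_le x j hj
    have hsep := hzsep i j hij
    have ht : dist (z i) (z j) ≤ dist (z i) x + dist x (z j) := dist_triangle _ _ _
    rw [dist_comm (z i) x] at ht
    have hρΔ : ρ ≤ Δ := by rw [hρ]; linarith
    linarith
  -- signs and coefficients
  have hσ : ∀ i, sigmaOf τ i = 1 ∨ sigmaOf τ i = -1 := sigmaOf_pm hτ
  have hσ' : ∀ i, sigmaOf τ' i = 1 ∨ sigmaOf τ' i = -1 := sigmaOf_pm hτ'
  have copos : ∀ (σ : Fin (2*m') → ℝ), (∀ i, σ i = 1 ∨ σ i = -1) → ∀ i, 0 ≤ co σ i := by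
    intro σ hs i
    rcases hs i with h | h <;> simp only [hcodef, h] <;>
      apply div_nonneg (by nlinarith) (by linarith)
  -- integrability and integral of Pdens
  have hPfun : ∀ (σ : Fin (2*m') → ℝ),
      (fun x => Pdens z w ρ δ σ x) = fun x => ∑ i, co σ i * ψ i x :=
    fun σ => funext (Pdens_eq σ)
  have hPint : ∀ (σ : Fin (2*m') → ℝ), Integrable (fun x => Pdens z w ρ δ σ x) := by
    intro σ
    rw [hPfun σ]
    exact integrable_finset_sum _ (fun i _ => (ψ_int i).const_mul _)
  have hsum2 : ∀ (σ : Fin (2*m') → ℝ), (∑ i, σ i = 0) →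
      ∑ i : Fin (2*m'), co σ i * 2 = 1 := by
    intro σ hs0
    have he : ∀ i : Fin (2*m'), co σ i * 2 = 1/N + (δ/N) * σ i := by
      intro i
      simp only [hcodef]
      field_simp
    rw [Finset.sum_congr rfl (fun i _ => he i), Finset.sum_add_distrib, ← Finset.mul_sum,
      hs0, mul_zero, add_zero, Finset.sum_const, Finset.card_univ, Fintype.card_fin,
      nsmul_eq_mul]
    rw [hNdef]
    field_simp
  have hσ0 : ∀ τ0 : Fin m' → ℝ, ∑ i, sigmaOf τ0 i = 0 := by
    intro τ0
    have := sum_sigmaOf2 (fun s t => s) τ0 τ0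
    simp only [add_neg_cancel] at this
    simpa using this
  have hPval : ∀ (σ : Fin (2*m') → ℝ), (∑ i, σ i = 0) →
      ∫ x, Pdens z w ρ δ σ x = 1 := by
    intro σ hs0
    rw [hPfun σ, integral_finset_sum _ (fun i _ => (ψ_int i).const_mul _)]
    simp_rw [integral_const_mul]
    rw [Finset.sum_congr rfl (fun i _ => by rw [ψ_integral i])]
    exact hsum2 σ hs0
  -- the pointwise sqrt identity
  have hs_eq : ∀ x, Real.sqrt (Pdens z w ρ δ (sigmaOf τ) x * Pdens z w ρ δ (sigmaOf τ') x)
      = ∑ i, Real.sqrt (co (sigmaOf τ) i * co (sigmaOf τ') i) * ψ i x := by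
    intro x
    rw [Pdens_eq, Pdens_eq]
    by_cases hx : ∃ i, ψ i x ≠ 0
    · obtain ⟨i0, hi0⟩ := hx
      have hz1 : ∀ j, j ≠ i0 → ψ j x = 0 := fun j hj => hdisjψ x i0 j (Ne.symm hj) hi0
      rw [Finset.sum_eq_single i0 (fun j _ hj => by rw [hz1 j hj, mul_zero])
          (fun h => absurd (Finset.mem_univ i0) h),
        Finset.sum_eq_single i0 (fun j _ hj => by rw [hz1 j hj, mul_zero])
          (fun h => absurd (Finset.mem_univ i0) h),
        Finset.sum_eq_single i0 (fun j _ hj => by rw [hz1 j hj, mul_zero])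
          (fun h => absurd (Finset.mem_univ i0) h)]
      rw [mul_mul_mul_comm,
        Real.sqrt_mul (mul_nonneg (copos _ hσ i0) (copos _ hσ' i0)),
        Real.sqrt_mul_self (ψ_nn i0 x)]
    · push_neg at hx
      simp only [hx, mul_zero, Finset.sum_const_zero, Real.sqrt_zero]
  have hs_int : Integrable
      (fun x => Real.sqrt (Pdens z w ρ δ (sigmaOf τ) x * Pdens z w ρ δ (sigmaOf τ') x)) := by
    rw [funext hs_eq]
    exact integrable_finset_sum _ (fun i _ => (ψ_int i).const_mul _)
  set A : ℝ := ∑ i, Real.sqrt (co (sigmaOf τ) i * co (sigmaOf τ') i) * 2 with hAdef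
  have hA_val :
      ∫ x, Real.sqrt (Pdens z w ρ δ (sigmaOf τ) x * Pdens z w ρ δ (sigmaOf τ') x) = A := by
    rw [funext hs_eq, integral_finset_sum _ (fun i _ => (ψ_int i).const_mul _)]
    simp_rw [integral_const_mul]
    rw [hAdef]
    exact Finset.sum_congr rfl (fun i _ => by rw [ψ_integral i])
  have hA0 : 0 ≤ A := Finset.sum_nonneg fun i _ => by positivity
  have hsumco : ∀ (τ0 : Fin m' → ℝ), ∑ i, co (sigmaOf τ0) i = 1/2 := by
    intro τ0
    have h := hsum2 (sigmaOf τ0) (hσ0 τ0)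
    rw [← Finset.sum_mul] at h
    linarith
  have hamgm : ∀ i : Fin (2*m'),
      Real.sqrt (co (sigmaOf τ) i * co (sigmaOf τ') i) * 2
        ≤ co (sigmaOf τ) i + co (sigmaOf τ') i := by
    intro i
    have ha := copos _ hσ i
    have hb := copos _ hσ' i
    have ht0 := Real.sqrt_nonneg (co (sigmaOf τ) i * co (sigmaOf τ') i)
    have ht2 := Real.sq_sqrt (mul_nonneg ha hb)
    nlinarith [sq_nonneg (co (sigmaOf τ) i - co (sigmaOf τ') i)]
  have hA1 : A ≤ 1 := by
    calc A ≤ ∑ i, (co (sigmaOf τ) i + co (sigmaOf τ') i) :=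
          Finset.sum_le_sum (fun i _ => hamgm i)
      _ = 1 := by rw [Finset.sum_add_distrib, hsumco τ, hsumco τ']; norm_num
  -- Hellinger bound for one factor
  have habs : ∑ i : Fin (2*m'), |sigmaOf τ i - sigmaOf τ' i| = 4 := by
    rw [sum_sigmaOf2 (fun s t => |s - t|) τ τ']
    have he : ∀ j : Fin m', |τ j - τ' j| + |(-τ j) - (-τ' j)| = 2 * |τ j - τ' j| := by
      intro j
      rw [show (-τ j) - (-τ' j) = -(τ j - τ' j) by ring, abs_neg]
      ring
    rw [Finset.sum_congr rfl (fun j _ => he j), ← Finset.mul_sum, hρττ']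
    norm_num
  have hterm : ∀ i : Fin (2*m'),
      2 * co (sigmaOf τ) i + 2 * co (sigmaOf τ') i
          - 4 * Real.sqrt (co (sigmaOf τ) i * co (sigmaOf τ') i)
        ≤ δ^2/N * |sigmaOf τ i - sigmaOf τ' i| := by
    intro i
    have := term_bound hδ0 hδ hNpos (hσ i) (hσ' i)
    simpa only [hcodef] using this
  have hDA : 2 - 2*A ≤ 4*δ^2/N := by
    have hsumeq : ∑ i : Fin (2*m'),
        (2 * co (sigmaOf τ) i + 2 * co (sigmaOf τ') i
          - 4 * Real.sqrt (co (sigmaOf τ) i * co (sigmaOf τ') i)) = 2 - 2*A := by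
      rw [Finset.sum_sub_distrib, Finset.sum_add_distrib, ← Finset.mul_sum, ← Finset.mul_sum,
        hsumco τ, hsumco τ']
      have : ∑ i, 4 * Real.sqrt (co (sigmaOf τ) i * co (sigmaOf τ') i) = 2 * A := by
        rw [hAdef, Finset.mul_sum]
        exact Finset.sum_congr rfl (fun i _ => by ring)
      rw [this]
      ring
    have hb : ∑ i : Fin (2*m'),
        (2 * co (sigmaOf τ) i + 2 * co (sigmaOf τ') i
          - 4 * Real.sqrt (co (sigmaOf τ) i * co (sigmaOf τ') i))
        ≤ ∑ i : Fin (2*m'), δ^2/N * |sigmaOf τ i - sigmaOf τ' i| :=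
      Finset.sum_le_sum (fun i _ => hterm i)
    rw [hsumeq, ← Finset.mul_sum, habs] at hb
    calc 2 - 2*A ≤ δ^2/N * 4 := hb
      _ = 4*δ^2/N := by ring
  -- now the product integral
  have hmeas : (Measure.pi fun _ : Fin n => (volume : Measure (EuclideanSpace ℝ (Fin d))))
      = (volume : Measure (Fin n → EuclideanSpace ℝ (Fin d))) := (volume_pi).symm
  rw [hmeas]
  have hPnn : ∀ (σ : Fin (2*m') → ℝ), (∀ i, σ i = 1 ∨ σ i = -1) →
      ∀ x, 0 ≤ Pdens z w ρ δ σ x := by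
    intro σ hs x
    rw [Pdens_eq]
    exact Finset.sum_nonneg fun i _ => mul_nonneg (copos σ hs i) (ψ_nn i x)
  have hexp : ∀ xs : Fin n → EuclideanSpace ℝ (Fin d),
      (Real.sqrt (∏ j, Pdens z w ρ δ (sigmaOf τ) (xs j)) -
          Real.sqrt (∏ j, Pdens z w ρ δ (sigmaOf τ') (xs j))) ^ 2
      = (∏ j, Pdens z w ρ δ (sigmaOf τ) (xs j)) + (∏ j, Pdens z w ρ δ (sigmaOf τ') (xs j))
        - 2 * ∏ j, Real.sqrt (Pdens z w ρ δ (sigmaOf τ) (xs j)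
            * Pdens z w ρ δ (sigmaOf τ') (xs j)) := by
    intro xs
    have hF : 0 ≤ ∏ j, Pdens z w ρ δ (sigmaOf τ) (xs j) :=
      Finset.prod_nonneg fun j _ => hPnn _ hσ _
    have hG : 0 ≤ ∏ j, Pdens z w ρ δ (sigmaOf τ') (xs j) :=
      Finset.prod_nonneg fun j _ => hPnn _ hσ' _
    have hFG : Real.sqrt (∏ j, Pdens z w ρ δ (sigmaOf τ) (xs j))
        * Real.sqrt (∏ j, Pdens z w ρ δ (sigmaOf τ') (xs j))
        = ∏ j, Real.sqrt (Pdens z w ρ δ (sigmaOf τ) (xs j)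
            * Pdens z w ρ δ (sigmaOf τ') (xs j)) := by
      rw [← Real.sqrt_mul hF, ← Finset.prod_mul_distrib,
        sqrt_prod _ _ (fun j _ => mul_nonneg (hPnn _ hσ _) (hPnn _ hσ' _))]
    rw [sub_sq, Real.sq_sqrt hF, Real.sq_sqrt hG, mul_assoc, hFG]
    ring
  have hIf : Integrable (fun xs : Fin n → EuclideanSpace ℝ (Fin d) =>
      ∏ j, Pdens z w ρ δ (sigmaOf τ) (xs j)) :=
    Integrable.fintype_prod (f := fun _ : Fin n => fun x => Pdens z w ρ δ (sigmaOf τ) x)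
      (fun _ => hPint _)
  have hIg : Integrable (fun xs : Fin n → EuclideanSpace ℝ (Fin d) =>
      ∏ j, Pdens z w ρ δ (sigmaOf τ') (xs j)) :=
    Integrable.fintype_prod (f := fun _ : Fin n => fun x => Pdens z w ρ δ (sigmaOf τ') x)
      (fun _ => hPint _)
  have hIs : Integrable (fun xs : Fin n → EuclideanSpace ℝ (Fin d) =>
      ∏ j, Real.sqrt (Pdens z w ρ δ (sigmaOf τ) (xs j) * Pdens z w ρ δ (sigmaOf τ') (xs j))) :=
    Integrable.fintype_prod (f := fun _ : Fin n => fun x =>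
      Real.sqrt (Pdens z w ρ δ (sigmaOf τ) x * Pdens z w ρ δ (sigmaOf τ') x))
      (fun _ => hs_int)
  rw [integral_congr_ae (Filter.Eventually.of_forall hexp)]
  have hIfg : Integrable (fun xs : Fin n → EuclideanSpace ℝ (Fin d) =>
      (∏ j, Pdens z w ρ δ (sigmaOf τ) (xs j)) + (∏ j, Pdens z w ρ δ (sigmaOf τ') (xs j))) :=
    hIf.add hIg
  have hIs2 : Integrable (fun xs : Fin n → EuclideanSpace ℝ (Fin d) =>
      2 * ∏ j, Real.sqrt (Pdens z w ρ δ (sigmaOf τ) (xs j)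
        * Pdens z w ρ δ (sigmaOf τ') (xs j))) := hIs.const_mul 2
  rw [integral_sub hIfg hIs2, integral_add hIf hIg, integral_const_mul]
  rw [← hmeas]
  rw [integral_fintype_prod_eq_pow (ι := Fin n)
      (f := fun x => Pdens z w ρ δ (sigmaOf τ) x),
    integral_fintype_prod_eq_pow (ι := Fin n)
      (f := fun x => Pdens z w ρ δ (sigmaOf τ') x),
    integral_fintype_prod_eq_pow (ι := Fin n)
      (f := fun x => Real.sqrt (Pdens z w ρ δ (sigmaOf τ) x * Pdens z w ρ δ (sigmaOf τ') x))]
  rw [hPval _ (hσ0 τ), hPval _ (hσ0 τ'), hA_val]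
  simp only [Fintype.card_fin, one_pow]
  -- final arithmetic
  have hbern : 1 + (n:ℝ) * (A - 1) ≤ A ^ n := by
    have h := one_add_mul_le_pow (a := A - 1) (by linarith) n
    rw [show (1 + (A - 1)) = A by ring] at h
    exact h
  have hnn : (0:ℝ) ≤ (n:ℝ) := Nat.cast_nonneg n
  have hstep : 1 + 1 - 2 * A ^ n ≤ (n:ℝ) * (2 - 2*A) := by linarith
  have hstep2 : (n:ℝ) * (2 - 2*A) ≤ (n:ℝ) * (4*δ^2/N) :=
    mul_le_mul_of_nonneg_left hDA hnn
  have hfin : (n:ℝ) * (4*δ^2/N) = 4 * n * δ^2 / (2 * m') := by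
    rw [hNdef]
    push_cast
    ring
  linarith

end
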